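/- Let N ≥ 1, let 0 < γ_1 ≤ γ_2 ≤ ... ≤ γ_N, and let 0 ≤ f_1 ≤ f_2 ≤ ... ≤ f_N. Define rewards by R_1 = f_1/γ_1 and R_n = f_n/γ_n + Σ_{i=1}^{n−1} ( f_i/γ_i − f_i/γ_{i+1} ) for n ≥ 2. Then the contract (f_n, R_n)_{n=1}^N satisfies every individual rationality constraint R_n − f_n/γ_n ≥ 0 and every incentive compatibility constraint R_n − f_n/γ_n ≥ R_i − f_i/γ_n for all n, i ∈ {1,...,N}. -/

import Mathlib

private lemma tel_sum (g : ℕ → ℝ) : ∀ a b : ℕ, a ≤ b →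
    ∑ j ∈ Finset.Ico a b, (g j - g (j + 1)) = g a - g b := by
  intro a b hab
  induction b with
  | zero =>
    obtain rfl := Nat.le_zero.mp hab
    simp
  | succ b ih =>
    rcases Nat.lt_or_ge a (b + 1) with h | h
    · have hab' : a ≤ b := Nat.lt_succ_iff.mp h
      rw [Finset.sum_Ico_succ_top hab', ih hab']
      ring
    · have : a = b + 1 := le_antisymm hab h
      subst this; simp

/-- With nondecreasing positive types, nondecreasing nonnegative
frequencies, and rewards given by the closed form, the contract satisfies all
IR and all IC constraints. Indices run over 1,...,N. -/
theorem reward_formula_implies_IR_IC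
    (N : ℕ) (hN : 1 ≤ N) (γ f R : ℕ → ℝ)
    (hγpos : ∀ n, 1 ≤ n → n ≤ N → 0 < γ n)
    (hγmono : ∀ n, 1 ≤ n → n < N → γ n ≤ γ (n + 1))
    (hf0 : 0 ≤ f 1)
    (hfmono : ∀ n, 1 ≤ n → n < N → f n ≤ f (n + 1))
    (hR1 : R 1 = f 1 / γ 1)
    (hRn : ∀ n, 2 ≤ n → n ≤ N →
      R n = f n / γ n + ∑ i ∈ Finset.Icc 1 (n - 1), (f i / γ i - f i / γ (i + 1))) :
    (∀ n, 1 ≤ n → n ≤ N → R n - f n / γ n ≥ 0) ∧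
    (∀ n i, 1 ≤ n → n ≤ N → 1 ≤ i → i ≤ N →
      R n - f n / γ n ≥ R i - f i / γ n) := by
  -- monotonicity of f on [1, N]
  have hfle : ∀ i j, 1 ≤ i → i ≤ j → j ≤ N → f i ≤ f j := by
    intro i j hi hij hj
    obtain ⟨k, rfl⟩ := Nat.exists_eq_add_of_le hij
    clear hij
    induction k with
    | zero => simp
    | succ k ih =>
      have h1 : f (i + k) ≤ f (i + k + 1) := hfmono (i + k) (by omega) (by omega)
      have h2 : f i ≤ f (i + k) := ih (by omega)
      have : i + (k + 1) = i + k + 1 := rfl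
      rw [this]
      linarith
  -- nonnegativity of f on [1, N]
  have hfnn : ∀ j, 1 ≤ j → j ≤ N → 0 ≤ f j := fun j hj hjN =>
    le_trans hf0 (hfle 1 j le_rfl hj hjN)
  -- key nonnegativity of inverse differences
  have hinv : ∀ j, 1 ≤ j → j + 1 ≤ N → 0 ≤ 1 / γ j - 1 / γ (j + 1) := by
    intro j hj hjN
    have hp : 0 < γ j := hγpos j hj (by omega)
    have hle : γ j ≤ γ (j + 1) := hγmono j hj (by omega)
    have := one_div_le_one_div_of_le hp hle
    linarith
  set S : ℕ → ℝ := fun n => ∑ j ∈ Finset.Ico 1 n, (f j / γ j - f j / γ (j + 1)) with hS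
  -- utility equals S
  have hRS : ∀ n, 1 ≤ n → n ≤ N → R n - f n / γ n = S n := by
    intro n h1 h2
    rcases eq_or_lt_of_le h1 with h | h
    · rw [← h, hR1]
      simp [hS]
    · rw [hRn n (by omega) h2]
      have he : Finset.Icc 1 (n - 1) = Finset.Ico 1 n := by
        rw [← Finset.Ico_add_one_right_eq_Icc]
        congr 1
        omega
      rw [he]
      ring
  -- splitting the sum
  have hsplit : ∀ a b, 1 ≤ a → a ≤ b →
      S b - S a = ∑ j ∈ Finset.Ico a b, (f j / γ j - f j / γ (j + 1)) := by
    intro a b ha hab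
    have := Finset.sum_Ico_consecutive (fun j => f j / γ j - f j / γ (j + 1)) ha hab
    simp only [hS]
    linarith [this]
  -- pointwise comparison helper
  have hpt : ∀ c j, 1 ≤ j → j + 1 ≤ N →
      (c ≤ f j → c / γ j - c / γ (j + 1) ≤ f j / γ j - f j / γ (j + 1)) ∧
      (f j ≤ c → f j / γ j - f j / γ (j + 1) ≤ c / γ j - c / γ (j + 1)) := by
    intro c j hj hjN
    have hd := hinv j hj hjN
    have e1 : ∀ x : ℝ, x / γ j - x / γ (j + 1) = x * (1 / γ j - 1 / γ (j + 1)) := by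
      intro x; ring
    constructor
    · intro hcf
      rw [e1 c, e1 (f j)]
      exact mul_le_mul_of_nonneg_right hcf hd
    · intro hcf
      rw [e1 c, e1 (f j)]
      exact mul_le_mul_of_nonneg_right hcf hd
  -- key lower bound (i ≤ n)
  have key_ge : ∀ i n, 1 ≤ i → i ≤ n → n ≤ N →
      f i / γ i - f i / γ n ≤ S n - S i := by
    intro i n hi hin hn
    rw [hsplit i n hi hin]
    calc f i / γ i - f i / γ n
        = ∑ j ∈ Finset.Ico i n, (f i / γ j - f i / γ (j + 1)) :=
          (tel_sum (fun j => f i / γ j) i n hin).symm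
      _ ≤ ∑ j ∈ Finset.Ico i n, (f j / γ j - f j / γ (j + 1)) := by
          apply Finset.sum_le_sum
          intro j hj
          rw [Finset.mem_Ico] at hj
          exact (hpt (f i) j (by omega) (by omega)).1
            (hfle i j hi hj.1 (by omega))
  -- key upper bound (n ≤ i)
  have key_le : ∀ n i, 1 ≤ n → n ≤ i → i ≤ N →
      S i - S n ≤ f i / γ n - f i / γ i := by
    intro n i hn hni hi
    rw [hsplit n i hn hni]
    calc ∑ j ∈ Finset.Ico n i, (f j / γ j - f j / γ (j + 1))
        ≤ ∑ j ∈ Finset.Ico n i, (f i / γ j - f i / γ (j + 1)) := by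
          apply Finset.sum_le_sum
          intro j hj
          rw [Finset.mem_Ico] at hj
          exact (hpt (f i) j (by omega) (by omega)).2
            (hfle j i (by omega) (le_of_lt hj.2) hi)
      _ = f i / γ n - f i / γ i := tel_sum (fun j => f i / γ j) n i hni
  constructor
  · -- IR
    intro n h1 h2
    rw [hRS n h1 h2]
    apply Finset.sum_nonneg
    intro j hj
    rw [Finset.mem_Ico] at hj
    have hd := hinv j hj.1 (by omega)
    have hfj := hfnn j hj.1 (by omega)
    have e : f j / γ j - f j / γ (j + 1) = f j * (1 / γ j - 1 / γ (j + 1)) := by ring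
    rw [e]
    exact mul_nonneg hfj hd
  · -- IC
    intro n i hn hnN hi hiN
    rw [hRS n hn hnN]
    have hRi : R i = S i + f i / γ i := by
      have := hRS i hi hiN
      linarith
    rw [hRi]
    rcases le_total i n with h | h
    · have := key_ge i n hi h hnN
      linarith
    · have := key_le n i hn h hiN
      linarith
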